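/- If set systems L and M have finite elasticity and both consist of subsets of the same set X, then their union L ∪ M (as a family of sets) has finite elasticity. -/

import Mathlib

/-- A set system has finite elasticity if it has no infinite elasticity. -/
def FiniteElasticity {X : Type*} (𝓛 : Set (Set X)) : Prop :=
  ¬ ∃ (t : ℕ → X) (L : ℕ → Set X),
      (∀ i, L i ∈ 𝓛) ∧ (∀ i j, j ≤ i → t j ∈ L i) ∧ (∀ i, t (i + 1) ∉ L i)

lemma aux_extract {X : Type*} (𝓛 : Set (Set X)) (t : ℕ → X) (L : ℕ → Set X)
    (hmem : ∀ i j, j ≤ i → t j ∈ L i) (hnot : ∀ i, t (i + 1) ∉ L i)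
    (hinf : {m | L m ∈ 𝓛}.Infinite) :
    ∃ (t' : ℕ → X) (L' : ℕ → Set X),
      (∀ i, L' i ∈ 𝓛) ∧ (∀ i j, j ≤ i → t' j ∈ L' i) ∧ (∀ i, t' (i + 1) ∉ L' i) := by
  set p : ℕ → Prop := fun m => L m ∈ 𝓛 with hp
  have hmono : StrictMono (Nat.nth p) := Nat.nth_strictMono hinf
  have hmemp : ∀ n, p (Nat.nth p n) := fun n => Nat.nth_mem_of_infinite hinf n
  refine ⟨fun n => Nat.rec (t 0) (fun m _ => t (Nat.nth p m + 1)) n,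
    fun n => L (Nat.nth p n), fun i => hmemp i, ?_, ?_⟩
  · intro i j hj
    cases j with
    | zero => exact hmem _ 0 (Nat.zero_le _)
    | succ m =>
      have : m < i := Nat.lt_of_succ_le hj
      exact hmem _ _ (Nat.succ_le_of_lt (hmono this))
  · intro i
    exact hnot (Nat.nth p i)

theorem stmt10 {X : Type*} (𝓛 𝓜 : Set (Set X))
    (h₁ : FiniteElasticity 𝓛) (h₂ : FiniteElasticity 𝓜) :
    FiniteElasticity (𝓛 ∪ 𝓜) := by
  rintro ⟨t, L, hL, hmem, hnot⟩
  have hunion : {m | L m ∈ 𝓛} ∪ {m | L m ∈ 𝓜} = Set.univ := by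
    ext m
    simpa using hL m
  have : {m | L m ∈ 𝓛}.Infinite ∨ {m | L m ∈ 𝓜}.Infinite := by
    by_contra h
    push_neg at h
    obtain ⟨hA, hB⟩ := h
    have := hA.union hB
    rw [hunion] at this
    exact Set.infinite_univ this
  rcases this with h | h
  · exact h₁ (aux_extract 𝓛 t L hmem hnot h)
  · exact h₂ (aux_extract 𝓜 t L hmem hnot h)
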